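/- Let X be a Banach space and β > 0. If f : ℝ → X is almost periodic (bounded continuous, and for every ε > 0 there exists ℓ > 0 such that every interval of length ℓ contains some T with sup_{t∈ℝ}‖f(t+T)-f(t)‖ < ε), then F(t) = ∫_{-∞}^t e^{-β(t-τ)} f(τ) dτ is also almost periodic. -/

import Mathlib

open MeasureTheory Real Set Filter

/-- Bohr almost periodicity: continuous, bounded, and for every `ε > 0` there is an
inclusion length `ℓ` such that every interval of length `ℓ` contains an `ε`-almost period. -/
def IsAlmostPeriodic {X : Type*} [NormedAddCommGroup X] (f : ℝ → X) : Prop :=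
  Continuous f ∧ (∃ C : ℝ, ∀ t : ℝ, ‖f t‖ ≤ C) ∧
    ∀ ε > (0:ℝ), ∃ ℓ > (0:ℝ), ∀ a : ℝ, ∃ T ∈ Set.Icc a (a + ℓ),
      ∀ t : ℝ, ‖f (t + T) - f t‖ < ε

section Helpers
variable {X : Type*} [NormedAddCommGroup X] [NormedSpace ℝ X] [CompleteSpace X]

lemma setIntegral_Iio_comp_add_right (c a : ℝ) (g : ℝ → X) :
    (∫ x in Iio c, g (x + a)) = ∫ x in Iio (c + a), g x := by
  have A : MeasurableEmbedding fun x : ℝ => x + a :=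
    (Homeomorph.addRight a).isClosedEmbedding.measurableEmbedding
  have h := A.setIntegral_map (μ := volume) g (Iio (c + a))
  rw [map_add_right_eq_self (volume : Measure ℝ)] at h
  rw [h]
  congr 1
  ext x
  simp [lt_sub_iff_add_lt]

lemma integrableOn_exp_mul_Iio {β : ℝ} (hβ : 0 < β) (t : ℝ) :
    IntegrableOn (fun τ : ℝ => Real.exp (β * τ)) (Iio t) := by
  have A : MeasurableEmbedding fun x : ℝ => -x :=
    (Homeomorph.neg ℝ).isClosedEmbedding.measurableEmbedding
  have h1 : IntegrableOn (fun x : ℝ => Real.exp (-β * x)) (Ioi (-t)) :=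
    exp_neg_integrableOn_Ioi _ hβ
  have h2 := (A.integrableOn_map_iff (μ := volume) (f := fun x : ℝ => Real.exp (-β * x)) (s := Ioi (-t)))
  rw [Measure.map_neg_eq_self (volume : Measure ℝ)] at h2
  rw [h2] at h1
  have h3 : ((fun x : ℝ => -x) ⁻¹' Ioi (-t)) = Iio t := by ext x; simp
  rw [h3] at h1
  refine h1.congr_fun (fun x _ => ?_) measurableSet_Iio
  simp [Function.comp]

lemma integral_exp_kernel {β : ℝ} (hβ : 0 < β) (t : ℝ) :
    (∫ τ in Iio t, Real.exp (-β * (t - τ))) = 1 / β := by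
  have h1 : (∫ τ in Iio t, Real.exp (-β * (t - τ)))
      = ∫ x in Iio 0, Real.exp (β * x) := by
    have := setIntegral_Iio_comp_add_right 0 t (fun τ => Real.exp (-β * (t - τ)))
    rw [zero_add] at this
    rw [← this]
    congr 1; ext x; congr 1; ring
  have h2 : (∫ x in Iio 0, Real.exp (β * x)) = ∫ x in Ioi 0, Real.exp (-β * x) := by
    have h := integral_comp_neg_Ioi 0 (fun x : ℝ => Real.exp (β * x))
    rw [neg_zero] at h
    rw [← integral_Iic_eq_integral_Iio, ← h]
    congr 1; ext x; congr 1; ring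
  have h3 : (∫ x in Ioi (0:ℝ), Real.exp (-β * x)) = 1 / β := by
    have := integral_comp_mul_left_Ioi (fun y : ℝ => Real.exp (-y)) 0 hβ
    simp only [mul_zero] at this
    rw [integral_exp_neg_Ioi_zero] at this
    calc (∫ x in Ioi (0:ℝ), Real.exp (-β * x))
        = ∫ x in Ioi (0:ℝ), Real.exp (-(β * x)) := by congr 1; ext x; congr 1; ring
      _ = 1 / β := by rw [this]; simp [one_div]
  rw [h1, h2, h3]

variable {β : ℝ}

lemma kernel_integrableOn (hβ : 0 < β) (t : ℝ) :
    IntegrableOn (fun τ : ℝ => Real.exp (-β * (t - τ))) (Iio t) := by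
  have : (fun τ : ℝ => Real.exp (-β * (t - τ)))
      = fun τ : ℝ => Real.exp (-β * t) * Real.exp (β * τ) := by
    funext τ; rw [← Real.exp_add]; ring_nf
  rw [this]
  exact (integrableOn_exp_mul_Iio hβ t).const_mul _

lemma integrableOn_kernel_smul (hβ : 0 < β) (t D : ℝ) (g : ℝ → X)
    (hg : Continuous g) (hD : ∀ τ, ‖g τ‖ ≤ D) :
    IntegrableOn (fun τ : ℝ => Real.exp (-β * (t - τ)) • g τ) (Iio t) := by
  refine Integrable.mono' (((kernel_integrableOn hβ t).mul_const D))
    (((Real.continuous_exp.comp (by continuity)).smul hg).aestronglyMeasurable.restrict) ?_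
  filter_upwards with τ
  rw [norm_smul, Real.norm_eq_abs, abs_of_pos (Real.exp_pos _)]
  exact mul_le_mul_of_nonneg_left (hD τ) (Real.exp_pos _).le

lemma norm_kernel_integral_le (hβ : 0 < β) (t D : ℝ) (g : ℝ → X)
    (hD : ∀ τ, ‖g τ‖ ≤ D) :
    ‖∫ τ in Iio t, Real.exp (-β * (t - τ)) • g τ‖ ≤ D / β := by
  calc ‖∫ τ in Iio t, Real.exp (-β * (t - τ)) • g τ‖
      ≤ ∫ τ in Iio t, ‖Real.exp (-β * (t - τ)) • g τ‖ := norm_integral_le_integral_norm _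
    _ ≤ ∫ τ in Iio t, Real.exp (-β * (t - τ)) * D := by
        refine integral_mono_of_nonneg (Filter.Eventually.of_forall fun τ => norm_nonneg _)
          ((kernel_integrableOn hβ t).mul_const D) (Filter.Eventually.of_forall fun τ => ?_)
        simp only []
        rw [norm_smul, Real.norm_eq_abs, abs_of_pos (Real.exp_pos _)]
        exact mul_le_mul_of_nonneg_left (hD τ) (Real.exp_pos _).le
    _ = D / β := by rw [integral_mul_const, integral_exp_kernel hβ]; ring

end Helpers

theorem stmt_9 {X : Type*} [NormedAddCommGroup X] [NormedSpace ℝ X] [CompleteSpace X]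
    (β : ℝ) (hβ : 0 < β) (f : ℝ → X) (hf : IsAlmostPeriodic f)
    (F : ℝ → X)
    (hF : ∀ t : ℝ, F t = ∫ τ in Iio t, Real.exp (-β * (t - τ)) • f τ) :
    IsAlmostPeriodic F := by
  obtain ⟨hfc, ⟨C, hC⟩, hap⟩ := hf
  have hC0 : 0 ≤ C := (norm_nonneg _).trans (hC 0)
  -- the rescaled integrand
  set h : ℝ → X := fun τ => Real.exp (β * τ) • f τ with hh
  have hhc : Continuous h := (Real.continuous_exp.comp (by continuity)).smul hfc
  have hker : ∀ t : ℝ, ∀ τ : ℝ,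
      Real.exp (-β * (t - τ)) • f τ = Real.exp (-β * t) • h τ := by
    intro t τ
    rw [hh, smul_smul, ← Real.exp_add]
    ring_nf
  have hInt : ∀ t : ℝ, IntegrableOn (fun τ : ℝ => Real.exp (-β * (t - τ)) • f τ) (Iio t) :=
    fun t => integrableOn_kernel_smul hβ t C f hfc hC
  have hIntH : ∀ t : ℝ, IntegrableOn h (Iio t) := by
    intro t
    have h2 : IntegrableOn
        (Real.exp (β * t) • fun τ : ℝ => Real.exp (-β * (t - τ)) • f τ) (Iio t) :=
      (hInt t).smul _
    refine h2.congr_fun (fun τ _ => ?_) measurableSet_Iio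
    show Real.exp (β * t) • (Real.exp (-β * (t - τ)) • f τ) = Real.exp (β * τ) • f τ
    rw [smul_smul, ← Real.exp_add]
    congr 2
    ring
  have hFG : ∀ t : ℝ, F t = Real.exp (-β * t) • ∫ τ in Iio t, h τ := by
    intro t
    rw [hF t, ← integral_smul]
    congr 1
    funext τ
    exact hker t τ
  refine ⟨?_, ⟨C / β, ?_⟩, ?_⟩
  · -- continuity
    have hIntHc : ∀ t : ℝ, IntegrableOn h (Iic t) := fun t =>
      Iff.mpr integrableOn_Iic_iff_integrableOn_Iio (hIntH t)
    have hGt : ∀ t : ℝ, (∫ τ in Iio t, h τ)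
        = (∫ τ in Iio 0, h τ) + ∫ x in (0:ℝ)..t, h x := by
      intro t
      have := intervalIntegral.integral_Iic_sub_Iic (hIntHc 0) (hIntHc t)
      rw [integral_Iic_eq_integral_Iio, integral_Iic_eq_integral_Iio] at this
      rw [← this]
      abel
    have hGc : Continuous fun t : ℝ => ∫ τ in Iio t, h τ := by
      have heq : (fun t : ℝ => ∫ τ in Iio t, h τ)
          = fun t : ℝ => (∫ τ in Iio 0, h τ) + ∫ x in (0:ℝ)..t, h x := funext hGt
      rw [heq]
      exact continuous_const.add
        (intervalIntegral.continuous_primitive (fun a b => hhc.intervalIntegrable a b) 0)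
    exact Continuous.congr
      (((Real.continuous_exp.comp (continuous_const.mul continuous_id)).smul hGc)) (fun t => (hFG t).symm)
  · intro t
    rw [hF t]
    exact norm_kernel_integral_le hβ t C f hC
  · intro ε hε
    obtain ⟨ℓ, hℓ, hT⟩ := hap (ε * β / 2) (by positivity)
    refine ⟨ℓ, hℓ, fun a => ?_⟩
    obtain ⟨T, hTmem, hTf⟩ := hT a
    refine ⟨T, hTmem, fun t => ?_⟩
    have hshift : F (t + T) = ∫ x in Iio t, Real.exp (-β * (t - x)) • f (x + T) := by
      rw [hF (t + T)]
      have := setIntegral_Iio_comp_add_right t T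
        (fun τ => Real.exp (-β * (t + T - τ)) • f τ)
      rw [← this]
      congr 1
      funext x
      congr 2
      ring
    have hIntShift : IntegrableOn (fun x : ℝ => Real.exp (-β * (t - x)) • f (x + T)) (Iio t) :=
      integrableOn_kernel_smul hβ t C (fun x => f (x + T))
        (hfc.comp (continuous_id.add continuous_const)) (fun x => hC _)
    have hdiff : F (t + T) - F t
        = ∫ x in Iio t, Real.exp (-β * (t - x)) • (f (x + T) - f x) := by
      rw [hshift, hF t, ← integral_sub hIntShift (hInt t)]
      congr 1
      funext x
      rw [smul_sub]
    have hbound : ‖F (t + T) - F t‖ ≤ (ε * β / 2) / β := by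
      rw [hdiff]
      exact norm_kernel_integral_le hβ t (ε * β / 2) _ (fun x => (hTf x).le)
    have : (ε * β / 2) / β = ε / 2 := by field_simp
    rw [this] at hbound
    linarith
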